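/- The connection formula expressing Ψ_n in terms of q-Hermite polynomials: Ψ_n(x) = Σ_{k=0}^{⌊n/2⌋} (q;q)_n · q^{k(k−n)} / [(q²;q²)_k (q;q)_{n−2k}] · H_{n−2k}(x|q) for all n ≥ 0. -/

import Mathlib

noncomputable section

def qPoch (a p : ℝ) (n : ℕ) : ℝ := ∏ j ∈ Finset.range n, (1 - a * p ^ j)

def qHermite (q : ℝ) : ℕ → ℝ → ℝ
  | 0 => fun _ => 1
  | 1 => fun x => 2 * x
  | (n + 2) => fun x => 2 * x * qHermite q (n + 1) x - (1 - q ^ (n + 1)) * qHermite q n x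

def Psi (q : ℝ) : ℕ → ℝ → ℝ
  | 0 => fun _ => 1
  | 1 => fun x => 2 * x
  | (n + 2) => fun x =>
      4 * x ^ 2 * Psi q n x - (1 - q ^ (n + 1)) * (1 - q ^ (-(n + 1) : ℤ)) * Psi q n x



def cc (q : ℝ) (n k : ℕ) : ℝ :=
  qPoch q q n * q ^ ((k : ℤ) * ((k : ℤ) - n)) / (qPoch (q ^ 2) (q ^ 2) k * qPoch q q (n - 2 * k))

def lam (q : ℝ) (n : ℕ) : ℝ := (1 - q ^ (n + 1)) * (1 - q ^ (-(n + 1) : ℤ))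

lemma qPoch_succ (a p : ℝ) (n : ℕ) : qPoch a p (n + 1) = qPoch a p n * (1 - a * p ^ n) :=
  Finset.prod_range_succ _ _

lemma fac_pos {q : ℝ} (hq0 : 0 < q) (hq1 : q < 1) (s : ℕ) : 0 < 1 - q * q ^ s := by
  have h1 : q ^ s ≤ 1 := pow_le_one₀ hq0.le hq1.le
  nlinarith

lemma fac2_pos {q : ℝ} (hq0 : 0 < q) (hq1 : q < 1) (s : ℕ) : 0 < 1 - q ^ 2 * (q ^ 2) ^ s := by
  have h1 : (q ^ 2) ^ s ≤ 1 := pow_le_one₀ (by positivity) (by nlinarith)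
  nlinarith [sq_nonneg q]

lemma qPoch_q_pos {q : ℝ} (hq0 : 0 < q) (hq1 : q < 1) (n : ℕ) : 0 < qPoch q q n :=
  Finset.prod_pos fun j _ => fac_pos hq0 hq1 j

lemma qPoch_q2_pos {q : ℝ} (hq0 : 0 < q) (hq1 : q < 1) (n : ℕ) : 0 < qPoch (q ^ 2) (q ^ 2) n :=
  Finset.prod_pos fun j _ => fac2_pos hq0 hq1 j

lemma qPoch_zero (a p : ℝ) : qPoch a p 0 = 1 := Finset.prod_range_zero _

lemma cc_zero {q : ℝ} (hq0 : 0 < q) (hq1 : q < 1) (n : ℕ) : cc q n 0 = 1 := by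
  have h := (qPoch_q_pos hq0 hq1 n).ne'
  simp [cc, qPoch_zero, div_self h]

lemma keyA2 (q : ℝ) (hq0 : 0 < q) (hq1 : q < 1) (m j : ℕ) :
    cc q (m+2*j+6) (j+2) = cc q (m+2*j+4) (j+2)
      + cc q (m+2*j+4) (j+1) * (((1 - q^(m+3)) + (1 - q^(m+2))) - lam q (m+2*j+4))
      + cc q (m+2*j+4) j * ((1 - q^(m+4)) * (1 - q^(m+3))) := by
  have hq : q ≠ 0 := ne_of_gt hq0
  unfold cc lam
  rw [show m+2*j+6 - 2*(j+2) = m+2 by omega, show m+2*j+4 - 2*(j+2) = m by omega,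
    show m+2*j+4 - 2*(j+1) = m+2 by omega, show m+2*j+4 - 2*j = m+4 by omega]
  rw [show ((j+2:ℕ):ℤ) * (((j+2:ℕ):ℤ) - ((m+2*j+6:ℕ):ℤ)) = -((j*j+j*m+6*j+2*m+8 : ℕ) : ℤ) by push_cast; ring]
  rw [show ((j+2:ℕ):ℤ) * (((j+2:ℕ):ℤ) - ((m+2*j+4:ℕ):ℤ)) = -((j*j+j*m+4*j+2*m+4 : ℕ) : ℤ) by push_cast; ring]
  rw [show ((j+1:ℕ):ℤ) * (((j+1:ℕ):ℤ) - ((m+2*j+4:ℕ):ℤ)) = -((j*j+j*m+4*j+m+3 : ℕ) : ℤ) by push_cast; ring]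
  rw [show ((j:ℕ):ℤ) * (((j:ℕ):ℤ) - ((m+2*j+4:ℕ):ℤ)) = -((j*j+j*m+4*j : ℕ) : ℤ) by push_cast; ring]
  rw [show (-(((m+2*j+4 : ℕ) : ℤ) + 1)) = -((m+2*j+5:ℕ):ℤ) by push_cast; ring]
  simp only [zpow_neg, zpow_natCast]
  have e1 : qPoch q q (m+2*j+6) = qPoch q q (m+2*j+4) * ((1 - q*q^(m+2*j+4)) * (1 - q*q^(m+2*j+5))) := by
    rw [show m+2*j+6 = (m+2*j+4)+1+1 by omega, qPoch_succ, qPoch_succ]; ring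
  have e2 : qPoch (q^2) (q^2) (j+2) = qPoch (q^2) (q^2) j * ((1 - q^2*(q^2)^j) * (1 - q^2*(q^2)^(j+1))) := by
    rw [show j+2 = j+1+1 by omega, qPoch_succ, qPoch_succ]; ring
  have e5 : qPoch (q^2) (q^2) (j+1) = qPoch (q^2) (q^2) j * (1 - q^2*(q^2)^j) := qPoch_succ _ _ _
  have e3 : qPoch q q (m+4) = qPoch q q m * ((1-q*q^m)*(1-q*q^(m+1))*(1-q*q^(m+2))*(1-q*q^(m+3))) := by
    rw [show m+4 = m+1+1+1+1 by omega, qPoch_succ, qPoch_succ, qPoch_succ, qPoch_succ]; ring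
  have e4 : qPoch q q (m+2) = qPoch q q m * ((1-q*q^m)*(1-q*q^(m+1))) := by
    rw [show m+2 = m+1+1 by omega, qPoch_succ, qPoch_succ]; ring
  rw [e1, e2, e3, e4, e5]
  have hA : qPoch q q (m+2*j+4) ≠ 0 := (qPoch_q_pos hq0 hq1 _).ne'
  have hB : qPoch (q^2) (q^2) j ≠ 0 := (qPoch_q2_pos hq0 hq1 _).ne'
  have hC : qPoch q q m ≠ 0 := (qPoch_q_pos hq0 hq1 _).ne'
  have f1 : (1 - q*q^m) ≠ 0 := (fac_pos hq0 hq1 m).ne'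
  have f2 : (1 - q*q^(m+1)) ≠ 0 := (fac_pos hq0 hq1 _).ne'
  have f3 : (1 - q*q^(m+2)) ≠ 0 := (fac_pos hq0 hq1 _).ne'
  have f4 : (1 - q*q^(m+3)) ≠ 0 := (fac_pos hq0 hq1 _).ne'
  have g1 : (1 - q^2*(q^2)^j) ≠ 0 := (fac2_pos hq0 hq1 _).ne'
  have g2 : (1 - q^2*(q^2)^(j+1)) ≠ 0 := (fac2_pos hq0 hq1 _).ne'
  field_simp
  all_goals ring

lemma my_pow_lt_one {q : ℝ} (hq0 : 0 < q) (hq1 : q < 1) (s : ℕ) (hs : s ≠ 0) : q ^ s < 1 :=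
  pow_lt_one₀ hq0.le hq1 hs

lemma one_sub_pow_ne {q : ℝ} (hq0 : 0 < q) (hq1 : q < 1) (s : ℕ) (hs : s ≠ 0) : (1 - q ^ s) ≠ 0 :=
  by have := my_pow_lt_one hq0 hq1 s hs; linarith

lemma keyA1 (q : ℝ) (hq0 : 0 < q) (hq1 : q < 1) (m : ℕ) :
    cc q (m+4) 1 = cc q (m+2) 1
      + cc q (m+2) 0 * (((1 - q^(m+3)) + (1 - q^(m+2))) - lam q (m+2)) := by
  have hq : q ≠ 0 := ne_of_gt hq0
  unfold cc lam
  rw [show m+4 - 2*1 = m+2 by omega, show m+2 - 2*1 = m by omega, show m+2 - 2*0 = m+2 by omega]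
  rw [show ((1:ℕ):ℤ) * (((1:ℕ):ℤ) - ((m+4:ℕ):ℤ)) = -((m+3 : ℕ) : ℤ) by push_cast; ring]
  rw [show ((1:ℕ):ℤ) * (((1:ℕ):ℤ) - ((m+2:ℕ):ℤ)) = -((m+1 : ℕ) : ℤ) by push_cast; ring]
  rw [show ((0:ℕ):ℤ) * (((0:ℕ):ℤ) - ((m+2:ℕ):ℤ)) = -((0 : ℕ) : ℤ) by push_cast; ring]
  rw [show (-(((m+2 : ℕ) : ℤ) + 1)) = -((m+3:ℕ):ℤ) by push_cast; ring]
  simp only [zpow_neg, zpow_natCast]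
  have e1 : qPoch q q (m+4) = qPoch q q (m+2) * ((1 - q*q^(m+2)) * (1 - q*q^(m+3))) := by
    rw [show m+4 = (m+2)+1+1 by omega, qPoch_succ, qPoch_succ]; ring
  have e4 : qPoch q q (m+2) = qPoch q q m * ((1-q*q^m)*(1-q*q^(m+1))) := by
    rw [show m+2 = m+1+1 by omega, qPoch_succ, qPoch_succ]; ring
  have e2 : qPoch (q^2) (q^2) 1 = 1 - q^2 := by
    rw [show (1:ℕ)=0+1 from rfl, qPoch_succ, qPoch_zero]; ring
  rw [e1, e2, e4]; simp only [qPoch_zero]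
  have hC : qPoch q q m ≠ 0 := (qPoch_q_pos hq0 hq1 _).ne'
  have f1 : (1 - q*q^m) ≠ 0 := (fac_pos hq0 hq1 m).ne'
  have f2 : (1 - q*q^(m+1)) ≠ 0 := (fac_pos hq0 hq1 _).ne'
  have g1 : (1 - q^2) ≠ 0 := one_sub_pow_ne hq0 hq1 2 (by norm_num)
  field_simp
  all_goals ring

lemma keyB2 (q : ℝ) (hq0 : 0 < q) (hq1 : q < 1) (j : ℕ) :
    cc q (2*j+5) (j+2) = cc q (2*j+3) (j+1) * (((1 - q^2) + (1 - q^1)) - lam q (2*j+3))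
      + cc q (2*j+3) j * ((1 - q^3) * (1 - q^2)) := by
  have hq : q ≠ 0 := ne_of_gt hq0
  unfold cc lam
  rw [show 2*j+5 - 2*(j+2) = 1 by omega, show 2*j+3 - 2*(j+1) = 1 by omega, show 2*j+3 - 2*j = 3 by omega]
  rw [show ((j+2:ℕ):ℤ) * (((j+2:ℕ):ℤ) - ((2*j+5:ℕ):ℤ)) = -((j*j+5*j+6 : ℕ) : ℤ) by push_cast; ring]
  rw [show ((j+1:ℕ):ℤ) * (((j+1:ℕ):ℤ) - ((2*j+3:ℕ):ℤ)) = -((j*j+3*j+2 : ℕ) : ℤ) by push_cast; ring]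
  rw [show ((j:ℕ):ℤ) * (((j:ℕ):ℤ) - ((2*j+3:ℕ):ℤ)) = -((j*j+3*j : ℕ) : ℤ) by push_cast; ring]
  rw [show (-(((2*j+3 : ℕ) : ℤ) + 1)) = -((2*j+4:ℕ):ℤ) by push_cast; ring]
  simp only [zpow_neg, zpow_natCast]
  have e1 : qPoch q q (2*j+5) = qPoch q q (2*j+3) * ((1 - q*q^(2*j+3)) * (1 - q*q^(2*j+4))) := by
    rw [show 2*j+5 = (2*j+3)+1+1 by omega, qPoch_succ, qPoch_succ]; ring
  have e2 : qPoch (q^2) (q^2) (j+2) = qPoch (q^2) (q^2) j * ((1 - q^2*(q^2)^j) * (1 - q^2*(q^2)^(j+1))) := by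
    rw [show j+2 = j+1+1 by omega, qPoch_succ, qPoch_succ]; ring
  have e5 : qPoch (q^2) (q^2) (j+1) = qPoch (q^2) (q^2) j * (1 - q^2*(q^2)^j) := qPoch_succ _ _ _
  have e3 : qPoch q q 3 = (1-q)*(1-q^2)*(1-q^3) := by
    rw [show (3:ℕ) = 0+1+1+1 from rfl, qPoch_succ, qPoch_succ, qPoch_succ, qPoch_zero]; ring
  have e4 : qPoch q q 1 = (1-q) := by
    rw [show (1:ℕ) = 0+1 from rfl, qPoch_succ, qPoch_zero]; ring
  rw [e1, e2, e3, e4, e5]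
  have hA : qPoch q q (2*j+3) ≠ 0 := (qPoch_q_pos hq0 hq1 _).ne'
  have hB : qPoch (q^2) (q^2) j ≠ 0 := (qPoch_q2_pos hq0 hq1 _).ne'
  have f1 : (1 - q) ≠ 0 := by intro h; linarith
  have f2 : (1 - q^2) ≠ 0 := one_sub_pow_ne hq0 hq1 2 (by norm_num)
  have f3 : (1 - q^3) ≠ 0 := one_sub_pow_ne hq0 hq1 3 (by norm_num)
  have g1 : (1 - q^2*(q^2)^j) ≠ 0 := (fac2_pos hq0 hq1 _).ne'
  have g2 : (1 - q^2*(q^2)^(j+1)) ≠ 0 := (fac2_pos hq0 hq1 _).ne'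
  field_simp
  all_goals ring

lemma keyC2 (q : ℝ) (hq0 : 0 < q) (hq1 : q < 1) (j : ℕ) :
    cc q (2*j+4) (j+2) = cc q (2*j+2) (j+1) * (((1 - q^1) + (1 - q^0)) - lam q (2*j+2))
      + cc q (2*j+2) j * ((1 - q^2) * (1 - q^1)) := by
  have hq : q ≠ 0 := ne_of_gt hq0
  unfold cc lam
  rw [show 2*j+4 - 2*(j+2) = 0 by omega, show 2*j+2 - 2*(j+1) = 0 by omega, show 2*j+2 - 2*j = 2 by omega]
  rw [show ((j+2:ℕ):ℤ) * (((j+2:ℕ):ℤ) - ((2*j+4:ℕ):ℤ)) = -((j*j+4*j+4 : ℕ) : ℤ) by push_cast; ring]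
  rw [show ((j+1:ℕ):ℤ) * (((j+1:ℕ):ℤ) - ((2*j+2:ℕ):ℤ)) = -((j*j+2*j+1 : ℕ) : ℤ) by push_cast; ring]
  rw [show ((j:ℕ):ℤ) * (((j:ℕ):ℤ) - ((2*j+2:ℕ):ℤ)) = -((j*j+2*j : ℕ) : ℤ) by push_cast; ring]
  rw [show (-(((2*j+2 : ℕ) : ℤ) + 1)) = -((2*j+3:ℕ):ℤ) by push_cast; ring]
  simp only [zpow_neg, zpow_natCast]
  have e1 : qPoch q q (2*j+4) = qPoch q q (2*j+2) * ((1 - q*q^(2*j+2)) * (1 - q*q^(2*j+3))) := by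
    rw [show 2*j+4 = (2*j+2)+1+1 by omega, qPoch_succ, qPoch_succ]; ring
  have e2 : qPoch (q^2) (q^2) (j+2) = qPoch (q^2) (q^2) j * ((1 - q^2*(q^2)^j) * (1 - q^2*(q^2)^(j+1))) := by
    rw [show j+2 = j+1+1 by omega, qPoch_succ, qPoch_succ]; ring
  have e5 : qPoch (q^2) (q^2) (j+1) = qPoch (q^2) (q^2) j * (1 - q^2*(q^2)^j) := qPoch_succ _ _ _
  have e3 : qPoch q q 2 = (1-q)*(1-q^2) := by
    rw [show (2:ℕ) = 0+1+1 from rfl, qPoch_succ, qPoch_succ, qPoch_zero]; ring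
  rw [e1, e2, e3, e5]; simp only [qPoch_zero]
  have hA : qPoch q q (2*j+2) ≠ 0 := (qPoch_q_pos hq0 hq1 _).ne'
  have hB : qPoch (q^2) (q^2) j ≠ 0 := (qPoch_q2_pos hq0 hq1 _).ne'
  have f1 : (1 - q) ≠ 0 := by intro h; linarith
  have f2 : (1 - q^2) ≠ 0 := one_sub_pow_ne hq0 hq1 2 (by norm_num)
  have g1 : (1 - q^2*(q^2)^j) ≠ 0 := (fac2_pos hq0 hq1 _).ne'
  have g2 : (1 - q^2*(q^2)^(j+1)) ≠ 0 := (fac2_pos hq0 hq1 _).ne'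
  field_simp
  all_goals ring

lemma keyB1 (q : ℝ) (hq0 : 0 < q) (hq1 : q < 1) :
    cc q 3 1 = cc q 1 0 * (((1 - q^2) + (1 - q^1)) - lam q 1) := by
  have hq : q ≠ 0 := ne_of_gt hq0
  unfold cc lam
  norm_num
  have e1 : qPoch q q 3 = (1-q)*(1-q^2)*(1-q^3) := by
    rw [show (3:ℕ) = 0+1+1+1 from rfl, qPoch_succ, qPoch_succ, qPoch_succ, qPoch_zero]; ring
  have e4 : qPoch q q 1 = (1-q) := by
    rw [show (1:ℕ) = 0+1 from rfl, qPoch_succ, qPoch_zero]; ring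
  have e2 : qPoch (q^2) (q^2) 1 = 1 - q^2 := by
    rw [show (1:ℕ) = 0+1 from rfl, qPoch_succ, qPoch_zero]; ring
  rw [e1, e2, e4]; simp only [qPoch_zero]
  have f1 : (1 - q) ≠ 0 := by intro h; linarith
  have f2 : (1 - q^2) ≠ 0 := one_sub_pow_ne hq0 hq1 2 (by norm_num)
  field_simp
  all_goals ring

lemma keyC1 (q : ℝ) (hq0 : 0 < q) (hq1 : q < 1) :
    cc q 2 1 = cc q 0 0 * (((1 - q^1) + (1 - q^0)) - lam q 0) := by
  have hq : q ≠ 0 := ne_of_gt hq0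
  unfold cc lam
  norm_num
  have e1 : qPoch q q 2 = (1-q)*(1-q^2) := by
    rw [show (2:ℕ) = 0+1+1 from rfl, qPoch_succ, qPoch_succ, qPoch_zero]; ring
  have e2 : qPoch (q^2) (q^2) 1 = 1 - q^2 := by
    rw [show (1:ℕ) = 0+1 from rfl, qPoch_succ, qPoch_zero]; ring
  rw [e1, e2]; simp only [qPoch_zero]
  have f1 : (1 - q) ≠ 0 := by intro h; linarith
  have f2 : (1 - q^2) ≠ 0 := one_sub_pow_ne hq0 hq1 2 (by norm_num)
  field_simp
  all_goals ring

lemma hermA (q x : ℝ) (m : ℕ) :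
    4*x^2*qHermite q m x = qHermite q (m+2) x + ((1-q^(m+1))+(1-q^m))*qHermite q m x
      + (1-q^m)*(1-q^(m-1))*qHermite q (m-2) x := by
  match m with
  | 0 => simp [qHermite]; ring
  | 1 => simp [qHermite]; ring
  | (m+2) => simp [qHermite]; ring

lemma key (q : ℝ) (hq0 : 0 < q) (hq1 : q < 1) (n k : ℕ) (hk : k ≤ n/2+1) :
    cc q (n+2) k = (if 2*k ≤ n then cc q n k else 0)
      + (if 1 ≤ k then cc q n (k-1) * (((1 - q^(n+3-2*k)) + (1 - q^(n+2-2*k))) - lam q n) else 0)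
      + (if 2 ≤ k then cc q n (k-2) * ((1 - q^(n+4-2*k)) * (1 - q^(n+3-2*k))) else 0) := by
  rcases Nat.eq_zero_or_pos k with rfl | hk1
  · simp [cc_zero hq0 hq1]
  · have h3 : 2*k ≤ n ∨ 2*k = n+1 ∨ 2*k = n+2 := by omega
    rcases h3 with h | h | h
    · rw [if_pos h, if_pos (by omega : 1 ≤ k)]
      rcases Nat.lt_or_ge k 2 with hk2 | hk2
      · have hk' : k = 1 := by omega
        subst hk'
        obtain ⟨m, rfl⟩ : ∃ m, n = m+2 := ⟨n-2, by omega⟩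
        rw [if_neg (by omega), add_zero]
        exact keyA1 q hq0 hq1 m
      · obtain ⟨j, rfl⟩ : ∃ j, k = j+2 := ⟨k-2, by omega⟩
        obtain ⟨m, rfl⟩ : ∃ m, n = m+2*j+4 := ⟨n-2*j-4, by omega⟩
        rw [if_pos (by omega), show m+2*j+4+3-2*(j+2) = m+3 by omega,
          show m+2*j+4+2-2*(j+2) = m+2 by omega, show m+2*j+4+4-2*(j+2) = m+4 by omega,
          show j+2-1 = j+1 by omega, show j+2-2 = j by omega,
          show m+2*j+4+2 = m+2*j+6 by omega]
        exact keyA2 q hq0 hq1 m j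
    · rw [if_neg (by omega), if_pos (by omega : 1 ≤ k), zero_add]
      rcases Nat.lt_or_ge k 2 with hk2 | hk2
      · have hk' : k = 1 := by omega
        subst hk'
        obtain rfl : n = 1 := by omega
        rw [if_neg (by omega), add_zero]
        exact keyB1 q hq0 hq1
      · obtain ⟨j, rfl⟩ : ∃ j, k = j+2 := ⟨k-2, by omega⟩
        obtain rfl : n = 2*j+3 := by omega
        rw [if_pos (by omega), show 2*j+3+3-2*(j+2) = 2 by omega,
          show 2*j+3+2-2*(j+2) = 1 by omega, show 2*j+3+4-2*(j+2) = 3 by omega,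
          show j+2-1 = j+1 by omega, show j+2-2 = j by omega,
          show 2*j+3+2 = 2*j+5 by omega]
        exact keyB2 q hq0 hq1 j
    · rw [if_neg (by omega), if_pos (by omega : 1 ≤ k), zero_add]
      rcases Nat.lt_or_ge k 2 with hk2 | hk2
      · have hk' : k = 1 := by omega
        subst hk'
        obtain rfl : n = 0 := by omega
        rw [if_neg (by omega), add_zero]
        exact keyC1 q hq0 hq1
      · obtain ⟨j, rfl⟩ : ∃ j, k = j+2 := ⟨k-2, by omega⟩
        obtain rfl : n = 2*j+2 := by omega
        rw [if_pos (by omega), show 2*j+2+3-2*(j+2) = 1 by omega,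
          show 2*j+2+2-2*(j+2) = 0 by omega, show 2*j+2+4-2*(j+2) = 2 by omega,
          show j+2-1 = j+1 by omega, show j+2-2 = j by omega,
          show 2*j+2+2 = 2*j+4 by omega]
        exact keyC2 q hq0 hq1 j

lemma step (q : ℝ) (hq0 : 0 < q) (hq1 : q < 1) (n : ℕ) (x : ℝ) :
    ∑ k ∈ Finset.range (n/2+2), cc q (n+2) k * qHermite q (n+2-2*k) x
      = (4*x^2 - lam q n) * ∑ k ∈ Finset.range (n/2+1), cc q n k * qHermite q (n-2*k) x := by
  rw [Finset.mul_sum]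
  have hrhs : ∀ k ∈ Finset.range (n/2+1),
      (4*x^2 - lam q n) * (cc q n k * qHermite q (n-2*k) x)
      = cc q n k * qHermite q ((n-2*k)+2) x
        + (cc q n k * ((((1 - q^((n-2*k)+1)) + (1 - q^(n-2*k))) - lam q n)) * qHermite q (n-2*k) x)
        + (cc q n k * ((1 - q^(n-2*k)) * (1 - q^(n-2*k-1))) * qHermite q (n-2*k-2) x) := by
    intro k _
    have h := hermA q x (n-2*k)
    linear_combination cc q n k * h
  rw [Finset.sum_congr rfl hrhs, Finset.sum_add_distrib, Finset.sum_add_distrib]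
  have hlhs : ∀ k ∈ Finset.range (n/2+2),
      cc q (n+2) k * qHermite q (n+2-2*k) x
      = (if 2*k ≤ n then cc q n k * qHermite q (n+2-2*k) x else 0)
        + (if 1 ≤ k then (cc q n (k-1) * (((1 - q^(n+3-2*k)) + (1 - q^(n+2-2*k))) - lam q n)) * qHermite q (n+2-2*k) x else 0)
        + (if 2 ≤ k then (cc q n (k-2) * ((1 - q^(n+4-2*k)) * (1 - q^(n+3-2*k)))) * qHermite q (n+2-2*k) x else 0) := by
    intro k hk
    rw [Finset.mem_range] at hk
    rw [key q hq0 hq1 n k (by omega), add_mul, add_mul, ite_mul, ite_mul, ite_mul,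
      zero_mul]
  rw [Finset.sum_congr rfl hlhs, Finset.sum_add_distrib, Finset.sum_add_distrib]
  congr 1
  · congr 1
    · -- first sums
      rw [Finset.sum_range_succ, if_neg (by omega), add_zero]
      refine Finset.sum_congr rfl fun k hk => ?_
      rw [Finset.mem_range] at hk
      rw [if_pos (by omega), show n+2-2*k = (n-2*k)+2 by omega]
    · -- second sums
      rw [Finset.sum_range_succ', if_neg (by omega), add_zero]
      refine Finset.sum_congr rfl fun k hk => ?_
      rw [Finset.mem_range] at hk
      rw [if_pos (by omega), show n+3-2*(k+1) = (n-2*k)+1 by omega,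
        show n+2-2*(k+1) = n-2*k by omega, show k+1-1 = k by omega]
  · -- third sums
    rw [Finset.sum_range_succ', Finset.sum_range_succ', if_neg (by omega), if_neg (by omega),
      add_zero, add_zero]
    rw [Finset.sum_range_succ (fun k => cc q n k * ((1 - q^(n-2*k)) * (1 - q^(n-2*k-1))) * qHermite q (n-2*k-2) x) (n/2)]
    have hz : cc q n (n/2) * ((1 - q^(n-2*(n/2))) * (1 - q^(n-2*(n/2)-1))) * qHermite q (n-2*(n/2)-2) x = 0 := by
      have h01 : n-2*(n/2) = 0 ∨ n-2*(n/2) = 1 := by omega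
      rcases h01 with h01 | h01 <;> rw [h01] <;> simp
    rw [hz, add_zero]
    refine Finset.sum_congr rfl fun k hk => ?_
    rw [Finset.mem_range] at hk
    rw [if_pos (by omega), show n+4-2*(k+1+1) = n-2*k by omega,
      show n+3-2*(k+1+1) = n-2*k-1 by omega, show k+1+1-2 = k by omega,
      show n+2-2*(k+1+1) = n-2*k-2 by omega]

/-- `Ψ_n(x) = Σ_{k=0}^{⌊n/2⌋} (q;q)_n q^{k(k-n)} / ((q²;q²)_k (q;q)_{n-2k}) H_{n-2k}(x|q)`. -/
theorem Psi_in_terms_of_qHermite (q : ℝ) (hq0 : 0 < q) (hq1 : q < 1) (n : ℕ) (x : ℝ) :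
    Psi q n x =
      ∑ k ∈ Finset.range (n / 2 + 1),
        qPoch q q n * q ^ ((k : ℤ) * ((k : ℤ) - n)) /
            (qPoch (q ^ 2) (q ^ 2) k * qPoch q q (n - 2 * k)) *
          qHermite q (n - 2 * k) x := by
  
  show Psi q n x = ∑ k ∈ Finset.range (n / 2 + 1), cc q n k * qHermite q (n - 2 * k) x
  induction n using Nat.twoStepInduction with
  | zero => simp [Psi, qHermite, cc_zero hq0 hq1]
  | one => simp [Psi, qHermite, cc_zero hq0 hq1]
  | more n ih _ =>
    rw [show (n+2)/2 + 1 = n/2+2 by omega, step q hq0 hq1 n x, ← ih]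
    simp only [Psi, lam]
    ring
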